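/- Let α₁, β₁, γ₁ ∈ (0, 2π) and define the complex numbers z = cos(β₁/2)·cos((α₁+γ₁)/2) + i·sin(β₁/2)·cos((α₁−γ₁)/2) and z₁ = cos(β₁/2)·sin((α₁+γ₁)/2) − i·sin(β₁/2)·sin((α₁−γ₁)/2), and assume z ≠ 0 and z₁ ≠ 0. Set α₂ = arg z + arg z₁, β₂ = 2·arg(|z/z₁| + i), and γ₂ = arg z − arg z₁. Then there exists a nonzero complex number c such that Z(γ₁)·X(β₁)·Z(α₁) = c · X(γ₂)·Z(β₂)·X(α₂). Moreover, if α₁ = γ₁ then α₂ ≡ γ₂ (mod 2π), and if α₁ + γ₁ = 2π then α₂ ≡ π + γ₂ (mod 2π). -/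

import Mathlib

open Real

/-- The 2×2 Hadamard matrix `(1/√2)·[[1,1],[1,−1]]`. -/
noncomputable def Hmat : Matrix (Fin 2) (Fin 2) ℂ :=
  ((Real.sqrt 2 : ℂ))⁻¹ • !![1, 1; 1, -1]

/-- The green phase `Z(θ) = [[1,0],[0,e^{iθ}]]`. -/
noncomputable def Zmat (θ : ℝ) : Matrix (Fin 2) (Fin 2) ℂ :=
  !![1, 0; 0, Complex.exp ((θ : ℂ) * Complex.I)]

/-- The red phase `X(θ) = H·Z(θ)·H`. -/
noncomputable def Xmat (θ : ℝ) : Matrix (Fin 2) (Fin 2) ℂ :=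
  Hmat * Zmat θ * Hmat

/-- Conversion from ZXZ to XZX Euler decompositions of single-qubit unitaries. -/
lemma sqrt2_inv_sq : (((Real.sqrt 2 : ℝ) : ℂ))⁻¹ * (((Real.sqrt 2 : ℝ) : ℂ))⁻¹ = 2⁻¹ := by
  rw [← mul_inv]
  norm_num [← Complex.ofReal_mul, Real.mul_self_sqrt]

lemma Hmat_mul_Hmat : Hmat * Hmat = 1 := by
  rw [Hmat, Matrix.smul_mul, Matrix.mul_smul, smul_smul, sqrt2_inv_sq, Matrix.mul_fin_two]
  norm_num
  ext i j
  fin_cases i <;> fin_cases j <;> simp [Matrix.one_apply]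

lemma Xmat_eq (β : ℝ) : Xmat β = !![(1 + Complex.exp (↑β * Complex.I))/2, (1 - Complex.exp (↑β * Complex.I))/2;
    (1 - Complex.exp (↑β * Complex.I))/2, (1 + Complex.exp (↑β * Complex.I))/2] := by
  rw [Xmat, Hmat, Zmat, Matrix.smul_mul, Matrix.mul_smul, Matrix.smul_mul, smul_smul,
    sqrt2_inv_sq, Matrix.mul_fin_two, Matrix.mul_fin_two]
  ext i j
  fin_cases i <;> fin_cases j <;> simp [smul_eq_mul] <;> ring

lemma exp_comb (x y : ℝ) : Complex.exp (↑x * Complex.I) * Complex.exp (↑y * Complex.I)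
    = Complex.exp (↑(x+y) * Complex.I) := by
  rw [← Complex.exp_add]; congr 1; push_cast; ring

lemma cos_full (β : ℝ) : Real.cos β = 2 * Real.cos (β/2)^2 - 1 := by
  have := Real.cos_two_mul (β/2); rw [show 2*(β/2) = β by ring] at this; linarith

lemma cos_full' (β : ℝ) : Real.cos β = 1 - 2 * Real.sin (β/2)^2 := by
  have := Real.cos_two_mul' (β/2); rw [show 2*(β/2) = β by ring] at this
  have h2 := Real.sin_sq_add_cos_sq (β/2); linarith

lemma sin_full (β : ℝ) : Real.sin β = 2 * Real.sin (β/2) * Real.cos (β/2) := by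
  have := Real.sin_two_mul (β/2); rw [show 2*(β/2) = β by ring] at this; linarith

lemma one_add_exp (β : ℝ) : (1 + Complex.exp (↑β * Complex.I))/2
    = Complex.exp (↑(β/2) * Complex.I) * (Real.cos (β/2) : ℂ) := by
  rw [Complex.exp_mul_I, Complex.exp_mul_I]
  simp only [← Complex.ofReal_cos, ← Complex.ofReal_sin]
  rw [cos_full β, sin_full β]
  push_cast [← Complex.ofReal_sin, ← Complex.ofReal_cos]
  ring

lemma one_sub_exp (β : ℝ) : (1 - Complex.exp (↑β * Complex.I))/2
    = -Complex.I * Complex.exp (↑(β/2) * Complex.I) * (Real.sin (β/2) : ℂ) := by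
  rw [Complex.exp_mul_I, Complex.exp_mul_I]
  simp only [← Complex.ofReal_cos, ← Complex.ofReal_sin]
  rw [cos_full' β, sin_full β]
  push_cast [← Complex.ofReal_sin, ← Complex.ofReal_cos]
  linear_combination ((Real.sin (β/2) : ℂ))^2 * Complex.I_sq

lemma zxz_form (α β γ : ℝ) :
  Zmat γ * Xmat β * Zmat α =
    Complex.exp (↑((α+β+γ)/2) * Complex.I) •
    !![(Real.cos (β/2):ℂ) * Complex.exp (↑(-((α+γ)/2)) * Complex.I),
       -Complex.I * (Real.sin (β/2):ℂ) * Complex.exp (↑((α-γ)/2) * Complex.I);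
       -Complex.I * (Real.sin (β/2):ℂ) * Complex.exp (↑(-((α-γ)/2)) * Complex.I),
       (Real.cos (β/2):ℂ) * Complex.exp (↑((α+γ)/2) * Complex.I)] := by
  rw [Xmat_eq, Zmat, Zmat, Matrix.mul_fin_two, Matrix.mul_fin_two]
  ext i j
  fin_cases i <;> fin_cases j <;>
    simp only [Matrix.smul_apply, Matrix.cons_val', Matrix.cons_val_zero, Matrix.cons_val_one,
      Matrix.head_cons, Matrix.head_fin_const, Matrix.empty_val', Matrix.cons_val_fin_one,
      Fin.zero_eta, Fin.mk_one, Matrix.of_apply,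
      smul_eq_mul, one_mul, mul_one, mul_zero, zero_mul, add_zero, zero_add]
  · rw [one_add_exp,
      show Complex.exp (↑((α+β+γ)/2) * Complex.I) * ((Real.cos (β/2):ℂ) * Complex.exp (↑(-((α+γ)/2)) * Complex.I))
        = Complex.exp (↑((α+β+γ)/2) * Complex.I) * Complex.exp (↑(-((α+γ)/2)) * Complex.I) * (Real.cos (β/2):ℂ) from by ring,
      exp_comb, show (α+β+γ)/2 + -((α+γ)/2) = β/2 from by ring]
  · rw [one_sub_exp,
      show -Complex.I * Complex.exp (↑(β/2) * Complex.I) * (Real.sin (β/2):ℂ) * Complex.exp (↑α * Complex.I)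
        = Complex.exp (↑(β/2) * Complex.I) * Complex.exp (↑α * Complex.I) * (-Complex.I * (Real.sin (β/2):ℂ)) from by ring,
      exp_comb,
      show Complex.exp (↑((α+β+γ)/2) * Complex.I) * (-Complex.I * (Real.sin (β/2):ℂ) * Complex.exp (↑((α-γ)/2) * Complex.I))
        = Complex.exp (↑((α+β+γ)/2) * Complex.I) * Complex.exp (↑((α-γ)/2) * Complex.I) * (-Complex.I * (Real.sin (β/2):ℂ)) from by ring,
      exp_comb, show β/2 + α = (α+β+γ)/2 + (α-γ)/2 from by ring]
  · rw [one_sub_exp,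
      show Complex.exp (↑γ * Complex.I) * (-Complex.I * Complex.exp (↑(β/2) * Complex.I) * (Real.sin (β/2):ℂ))
        = Complex.exp (↑γ * Complex.I) * Complex.exp (↑(β/2) * Complex.I) * (-Complex.I * (Real.sin (β/2):ℂ)) from by ring,
      exp_comb,
      show Complex.exp (↑((α+β+γ)/2) * Complex.I) * (-Complex.I * (Real.sin (β/2):ℂ) * Complex.exp (↑(-((α-γ)/2)) * Complex.I))
        = Complex.exp (↑((α+β+γ)/2) * Complex.I) * Complex.exp (↑(-((α-γ)/2)) * Complex.I) * (-Complex.I * (Real.sin (β/2):ℂ)) from by ring,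
      exp_comb, show γ + β/2 = (α+β+γ)/2 + -((α-γ)/2) from by ring]
  · rw [one_add_exp,
      show Complex.exp (↑γ * Complex.I) * (Complex.exp (↑(β/2) * Complex.I) * (Real.cos (β/2):ℂ)) * Complex.exp (↑α * Complex.I)
        = Complex.exp (↑γ * Complex.I) * Complex.exp (↑(β/2) * Complex.I) * Complex.exp (↑α * Complex.I) * (Real.cos (β/2):ℂ) from by ring,
      exp_comb, exp_comb,
      show Complex.exp (↑((α+β+γ)/2) * Complex.I) * ((Real.cos (β/2):ℂ) * Complex.exp (↑((α+γ)/2) * Complex.I))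
        = Complex.exp (↑((α+β+γ)/2) * Complex.I) * Complex.exp (↑((α+γ)/2) * Complex.I) * (Real.cos (β/2):ℂ) from by ring,
      exp_comb, show γ + β/2 + α = (α+β+γ)/2 + (α+γ)/2 from by ring]

lemma H_conj (A : Matrix (Fin 2) (Fin 2) ℂ) :
    Hmat * A * Hmat = (2:ℂ)⁻¹ • !![A 0 0 + A 0 1 + A 1 0 + A 1 1, A 0 0 - A 0 1 + A 1 0 - A 1 1;
      A 0 0 + A 0 1 - A 1 0 - A 1 1, A 0 0 - A 0 1 - A 1 0 + A 1 1] := by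
  rw [Hmat, Matrix.mul_smul, Matrix.smul_mul, Matrix.smul_mul, smul_smul, sqrt2_inv_sq]
  ext i j
  fin_cases i <;> fin_cases j <;>
    simp [Matrix.mul_apply, Matrix.vecMul, dotProduct, Fin.sum_univ_two, Matrix.smul_apply, smul_eq_mul] <;> ring


theorem zxz_to_xzx (α₁ β₁ γ₁ : ℝ)
    (hα : α₁ ∈ Set.Ioo 0 (2 * π)) (hβ : β₁ ∈ Set.Ioo 0 (2 * π))
    (hγ : γ₁ ∈ Set.Ioo 0 (2 * π))
    (z z₁ : ℂ)
    (hz : z = (↑(Real.cos (β₁ / 2) * Real.cos ((α₁ + γ₁) / 2)) : ℂ) +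
      Complex.I * (↑(Real.sin (β₁ / 2) * Real.cos ((α₁ - γ₁) / 2)) : ℂ))
    (hz₁ : z₁ = (↑(Real.cos (β₁ / 2) * Real.sin ((α₁ + γ₁) / 2)) : ℂ) -
      Complex.I * (↑(Real.sin (β₁ / 2) * Real.sin ((α₁ - γ₁) / 2)) : ℂ))
    (hz0 : z ≠ 0) (hz₁0 : z₁ ≠ 0)
    (α₂ β₂ γ₂ : ℝ)
    (hα₂ : α₂ = Complex.arg z + Complex.arg z₁)
    (hβ₂ : β₂ = 2 * Complex.arg (((‖z / z₁‖ : ℝ) : ℂ) + Complex.I))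
    (hγ₂ : γ₂ = Complex.arg z - Complex.arg z₁) :
    (∃ c : ℂ, c ≠ 0 ∧
      Zmat γ₁ * Xmat β₁ * Zmat α₁ = c • (Xmat γ₂ * Zmat β₂ * Xmat α₂)) ∧
    (α₁ = γ₁ → (α₂ : Real.Angle) = (γ₂ : Real.Angle)) ∧
    (α₁ + γ₁ = 2 * π → (α₂ : Real.Angle) = (π : ℝ) + (γ₂ : Real.Angle)) := by
  refine ⟨?_, ?_, ?_⟩
  · -- main matrix statement
    set W : Matrix (Fin 2) (Fin 2) ℂ :=
      !![(starRingEnd ℂ) z, -Complex.I * z₁; -Complex.I * ((starRingEnd ℂ) z₁), z] with hW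
    have hr : (0:ℝ) < ‖z‖ := by
      simpa using (norm_pos_iff.mpr hz0)
    have hr₁ : (0:ℝ) < ‖z₁‖ := by
      simpa using (norm_pos_iff.mpr hz₁0)
    have hsum : ‖z‖ ^ 2 + ‖z₁‖ ^ 2 = 1 := by
      rw [Complex.sq_norm, Complex.sq_norm, Complex.normSq_apply, Complex.normSq_apply, hz, hz₁]
      simp only [Complex.add_re, Complex.add_im, Complex.sub_re, Complex.sub_im,
        Complex.mul_re, Complex.mul_im, Complex.I_re, Complex.I_im, Complex.ofReal_re,
        Complex.ofReal_im]
      nlinarith [Real.sin_sq_add_cos_sq (β₁/2), Real.sin_sq_add_cos_sq ((α₁+γ₁)/2),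
        Real.sin_sq_add_cos_sq ((α₁-γ₁)/2)]
    -- the half angle of β₂
    have hw0 : ((‖z / z₁‖ : ℝ) : ℂ) + Complex.I ≠ 0 := by
      intro h
      have := congrArg Complex.im h
      simp at this
    have habsw : ‖((‖z / z₁‖ : ℝ) : ℂ) + Complex.I‖
        = (‖z₁‖)⁻¹ := by
      rw [Complex.norm_def, Complex.normSq_apply]
      simp only [Complex.add_re, Complex.add_im, Complex.ofReal_re, Complex.ofReal_im,
        Complex.I_re, Complex.I_im, add_zero, zero_add, norm_div]
      rw [show ‖z‖ / ‖z₁‖ * (‖z‖ / ‖z₁‖) + 1 * 1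
          = ((‖z₁‖)⁻¹)^2 by field_simp; nlinarith [hsum]]
      exact Real.sqrt_sq (by positivity)
    have hhalf : β₂ / 2 = Complex.arg (((‖z / z₁‖ : ℝ) : ℂ) + Complex.I) := by
      rw [hβ₂]; ring
    have hcos : Real.cos (β₂/2) = ‖z‖ := by
      rw [hhalf, Complex.cos_arg hw0, habsw]
      simp only [Complex.add_re, Complex.ofReal_re, Complex.I_re, add_zero, norm_div]
      field_simp
    have hsin : Real.sin (β₂/2) = ‖z₁‖ := by
      rw [hhalf, Complex.sin_arg, habsw]
      simp only [Complex.add_im, Complex.ofReal_im, Complex.I_im, zero_add]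
      field_simp
    have hs₂ : (α₂ + γ₂)/2 = Complex.arg z := by rw [hα₂, hγ₂]; ring
    have hd₂ : (α₂ - γ₂)/2 = Complex.arg z₁ := by rw [hα₂, hγ₂]; ring
    have hpol : (↑(‖z‖) : ℂ) * Complex.exp (↑(Complex.arg z) * Complex.I) = z :=
      Complex.norm_mul_exp_arg_mul_I z
    have hpol₁ : (↑(‖z₁‖) : ℂ) * Complex.exp (↑(Complex.arg z₁) * Complex.I) = z₁ :=
      Complex.norm_mul_exp_arg_mul_I z₁
    have hconj_exp : ∀ w : ℂ, (↑(‖w‖) : ℂ) * Complex.exp (↑(-(Complex.arg w)) * Complex.I)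
        = (starRingEnd ℂ) w := by
      intro w
      have h := congrArg (starRingEnd ℂ) (Complex.norm_mul_exp_arg_mul_I w)
      rw [map_mul, Complex.conj_ofReal, ← Complex.exp_conj,
        show (starRingEnd ℂ) (↑(Complex.arg w) * Complex.I) = (↑(-(Complex.arg w)) : ℂ) * Complex.I by
          rw [map_mul, Complex.conj_ofReal, Complex.conj_I]; push_cast; ring] at h
      exact h
    -- h2 : the XZX side
    have h2 : Zmat γ₂ * Xmat β₂ * Zmat α₂
        = Complex.exp (↑((α₂+β₂+γ₂)/2) * Complex.I) • W := by
      rw [zxz_form]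
      congr 1
      rw [hW]
      ext i j
      fin_cases i <;> fin_cases j <;>
        simp only [Matrix.cons_val', Matrix.cons_val_zero, Matrix.cons_val_one,
          Matrix.head_cons, Matrix.head_fin_const, Matrix.empty_val', Matrix.cons_val_fin_one,
          Fin.zero_eta, Fin.mk_one, Matrix.of_apply]
      · rw [hcos, show -((α₂+γ₂)/2) = -(Complex.arg z) by rw [hs₂]]
        exact hconj_exp z
      · rw [hsin, hd₂, mul_assoc, hpol₁]
      · rw [hsin, show -((α₂-γ₂)/2) = -(Complex.arg z₁) by rw [hd₂], mul_assoc, hconj_exp z₁]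
      · rw [hcos, hs₂, hpol]
    -- h1 : the ZXZ side conjugated by H
    have h1 : Hmat * (Zmat γ₁ * Xmat β₁ * Zmat α₁) * Hmat
        = Complex.exp (↑((α₁+β₁+γ₁)/2) * Complex.I) • W := by
      rw [zxz_form, Matrix.mul_smul, Matrix.smul_mul, H_conj]
      congr 1
      rw [hW]
      ext i j
      fin_cases i <;> fin_cases j <;>
        simp only [Matrix.smul_apply, Matrix.cons_val', Matrix.cons_val_zero, Matrix.cons_val_one,
          Matrix.head_cons, Matrix.head_fin_const, Matrix.empty_val', Matrix.cons_val_fin_one,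
          Fin.zero_eta, Fin.mk_one, Matrix.of_apply, smul_eq_mul]
      · rw [hz]
        simp only [Complex.exp_mul_I, Complex.cos_neg, Complex.sin_neg, ← Complex.ofReal_cos, ← Complex.ofReal_sin,
          Real.cos_neg, Real.sin_neg, map_add, map_sub, map_mul, Complex.conj_I,
          Complex.conj_ofReal, Complex.ofReal_neg, Complex.ofReal_mul]
        ring
      · rw [hz₁]
        simp only [Complex.exp_mul_I, Complex.cos_neg, Complex.sin_neg, ← Complex.ofReal_cos, ← Complex.ofReal_sin,
          Real.cos_neg, Real.sin_neg, Complex.ofReal_neg, Complex.ofReal_mul]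
        ring
      · rw [hz₁]
        simp only [Complex.exp_mul_I, Complex.cos_neg, Complex.sin_neg, ← Complex.ofReal_cos, ← Complex.ofReal_sin,
          Real.cos_neg, Real.sin_neg, map_add, map_sub, map_mul, Complex.conj_I,
          Complex.conj_ofReal, Complex.ofReal_neg, Complex.ofReal_mul]
        ring
      · rw [hz]
        simp only [Complex.exp_mul_I, Complex.cos_neg, Complex.sin_neg, ← Complex.ofReal_cos, ← Complex.ofReal_sin,
          Real.cos_neg, Real.sin_neg, Complex.ofReal_neg, Complex.ofReal_mul]
        ring
    -- assembly
    refine ⟨Complex.exp (↑((α₁+β₁+γ₁)/2) * Complex.I)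
      * (Complex.exp (↑((α₂+β₂+γ₂)/2) * Complex.I))⁻¹,
      mul_ne_zero (Complex.exp_ne_zero _) (inv_ne_zero (Complex.exp_ne_zero _)), ?_⟩
    have hX : Xmat γ₂ * Zmat β₂ * Xmat α₂ = Hmat * (Zmat γ₂ * Xmat β₂ * Zmat α₂) * Hmat := by
      simp only [Xmat, Matrix.mul_assoc]
    have hLHS : Zmat γ₁ * Xmat β₁ * Zmat α₁
        = Hmat * (Hmat * (Zmat γ₁ * Xmat β₁ * Zmat α₁) * Hmat) * Hmat := by
      calc Zmat γ₁ * Xmat β₁ * Zmat α₁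
          = (Hmat * Hmat) * (Zmat γ₁ * Xmat β₁ * Zmat α₁) * (Hmat * Hmat) := by
            rw [Hmat_mul_Hmat, Matrix.one_mul, Matrix.mul_one]
        _ = Hmat * (Hmat * (Zmat γ₁ * Xmat β₁ * Zmat α₁) * Hmat) * Hmat := by
            simp only [Matrix.mul_assoc]
    rw [hLHS, h1, hX, h2]
    simp only [Matrix.mul_smul, Matrix.smul_mul, smul_smul]
    congr 1
    rw [mul_assoc, inv_mul_cancel₀ (Complex.exp_ne_zero _), mul_one]
  · -- α₁ = γ₁ case
    intro h
    subst h
    have him : z₁ = ((Real.cos (β₁/2) * Real.sin ((α₁+α₁)/2) : ℝ) : ℂ) := by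
      rw [hz₁]; simp
    have hre : Real.cos (β₁/2) * Real.sin ((α₁+α₁)/2) ≠ 0 := by
      intro h0; apply hz₁0; rw [him, h0]; simp
    have harg2 : α₂ - γ₂ = 2 * Complex.arg z₁ := by rw [hα₂, hγ₂]; ring
    rcases lt_or_gt_of_ne hre with hneg | hpos
    · have harg : Complex.arg z₁ = π := by rw [him]; exact Complex.arg_ofReal_of_neg hneg
      rw [Real.Angle.angle_eq_iff_two_pi_dvd_sub]
      exact ⟨1, by rw [harg2, harg]; push_cast; ring⟩
    · have harg : Complex.arg z₁ = 0 := by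
        rw [him]; exact Complex.arg_ofReal_of_nonneg hpos.le
      rw [Real.Angle.angle_eq_iff_two_pi_dvd_sub]
      exact ⟨0, by rw [harg2, harg]; push_cast; ring⟩
  · -- α₁ + γ₁ = 2π case
    intro h
    have hs : (α₁+γ₁)/2 = π := by linarith
    set y : ℝ := Real.sin (β₁/2) * Real.sin ((α₁-γ₁)/2) with hydef
    have him : z₁ = -(Complex.I * (y : ℂ)) := by
      rw [hz₁, hs]; simp
    have hre : z₁.re = 0 := by rw [him]; simp
    have him' : z₁.im = -y := by rw [him]; simp
    have hy : y ≠ 0 := by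
      intro h0; apply hz₁0; rw [him, h0]; simp
    have harg2 : α₂ - (π + γ₂) = 2 * Complex.arg z₁ - π := by rw [hα₂, hγ₂]; ring
    rw [← Real.Angle.coe_add, Real.Angle.angle_eq_iff_two_pi_dvd_sub]
    rcases lt_or_gt_of_ne hy with hneg | hpos
    · have harg : Complex.arg z₁ = π/2 :=
        Complex.arg_eq_pi_div_two_iff.mpr ⟨hre, by rw [him']; linarith⟩
      exact ⟨0, by rw [harg2, harg]; push_cast; ring⟩
    · have harg : Complex.arg z₁ = -(π/2) :=
        Complex.arg_eq_neg_pi_div_two_iff.mpr ⟨hre, by rw [him']; linarith⟩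
      exact ⟨-1, by rw [harg2, harg]; push_cast; ring⟩
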